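/- Parrilo cone membership certificate (sufficiency): let B be a symmetric n×n matrix and suppose there exist symmetric matrices K^(1),…,K^(n) with (i) B − K^(i) ⪰ 0 for all i, (ii) K^(i)_{ii} = 0 for all i, (iii) K^(j)_{ii} + 2K^(i)_{ij} = 0 for all i ≠ j, and (iv) K^(i)_{jk} + K^(j)_{ik} + K^(k)_{ij} ≥ 0 for all i > j > k. Then the polynomial (Σ_i x_i^2)·(Σ_{i,j} x_i^2 B_{ij} x_j^2) is nonnegative on ℝ^n. -/

import Mathlib

open Matrix BigOperators

theorem stmt_13 (n : ℕ) (B : Matrix (Fin n) (Fin n) ℝ) (hB : B.IsSymm)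
    (K : Fin n → Matrix (Fin n) (Fin n) ℝ) (hKsymm : ∀ i, (K i).IsSymm)
    (h1 : ∀ i, (B - K i).PosSemidef)
    (h2 : ∀ i, K i i i = 0)
    (h3 : ∀ i j, i ≠ j → K j i i + 2 * K i i j = 0)
    (h4 : ∀ i j k, j < i → k < j → 0 ≤ K i j k + K j i k + K k i j) :
    ∀ x : Fin n → ℝ,
      0 ≤ (∑ i, x i ^ 2) * (∑ i, ∑ j, x i ^ 2 * B i j * x j ^ 2) := by
  intro x
  have sym : ∀ a b c : Fin n, K a b c = K a c b := by
    intro a b c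
    have h := hKsymm a
    rw [Matrix.IsSymm] at h
    conv_lhs => rw [← h]
    rfl
  -- the symmetrized coefficient is nonnegative everywhere
  have hc : ∀ i j k : Fin n, 0 ≤ K i j k + K j i k + K k i j := by
    intro i j k
    rcases eq_or_ne i j with rfl | hij
    · rcases eq_or_ne i k with rfl | hik
      · have := h2 i; linarith
      · have := h3 i k hik; linarith
    · rcases eq_or_ne i k with rfl | hik
      · have := h3 i j hij
        have e1 : K i j i = K i i j := sym i j i
        linarith
      · rcases eq_or_ne j k with rfl | hjk
        · have := h3 j i hij.symm
          have e1 : K j i j = K j j i := sym j i j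
          linarith
        · -- all distinct; sort
          have e1 : K i j k = K i k j := sym i j k
          have e2 : K j i k = K j k i := sym j i k
          have e3 : K k i j = K k j i := sym k i j
          rcases lt_trichotomy i j with hij' | rfl | hij'
          · rcases lt_trichotomy j k with hjk' | rfl | hjk'
            · have := h4 k j i hjk' hij'
              linarith
            · exact absurd rfl hjk
            · rcases lt_trichotomy i k with hik' | rfl | hik'
              · have := h4 j k i hjk' hik'
                linarith
              · exact absurd rfl hik
              · have := h4 j i k hij' hik'
                linarith
          · exact absurd rfl hij
          · rcases lt_trichotomy j k with hjk' | rfl | hjk'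
            · rcases lt_trichotomy i k with hik' | rfl | hik'
              · have := h4 k i j hik' hij'
                linarith
              · exact absurd rfl hik
              · have := h4 i k j hik' hjk'
                linarith
            · exact absurd rfl hjk
            · exact h4 i j k hij' hjk'
  set S : ℝ := ∑ i, ∑ j, ∑ k, x i ^ 2 * x j ^ 2 * x k ^ 2 * K i j k with hSdef
  have key : (∑ i, x i ^ 2) * (∑ i, ∑ j, x i ^ 2 * B i j * x j ^ 2)
      = (∑ i, x i ^ 2 * (∑ j, ∑ k, x j ^ 2 * (B - K i) j k * x k ^ 2)) + S := by
    rw [hSdef, Finset.sum_mul, ← Finset.sum_add_distrib]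
    refine Finset.sum_congr rfl fun i _ => ?_
    simp only [Matrix.sub_apply]
    rw [Finset.mul_sum, Finset.mul_sum, ← Finset.sum_add_distrib]
    refine Finset.sum_congr rfl fun j _ => ?_
    rw [Finset.mul_sum, Finset.mul_sum, ← Finset.sum_add_distrib]
    exact Finset.sum_congr rfl fun k _ => by ring
  have hpsd : ∀ i : Fin n, 0 ≤ ∑ j, ∑ k, x j ^ 2 * (B - K i) j k * x k ^ 2 := by
    intro i
    have h := (h1 i).dotProduct_mulVec_nonneg (fun j => x j ^ 2)
    have hrw : star (fun j => x j ^ 2) ⬝ᵥ (B - K i) *ᵥ (fun j => x j ^ 2)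
        = ∑ j, ∑ k, x j ^ 2 * (B - K i) j k * x k ^ 2 := by
      simp only [star, dotProduct, Matrix.mulVec, Finset.mul_sum]
      exact Finset.sum_congr rfl fun j _ => Finset.sum_congr rfl fun k _ => by
        simp [mul_comm, mul_assoc, mul_left_comm]
    rw [hrw] at h
    exact h
  have hS2 : S = ∑ i, ∑ j, ∑ k, x i ^ 2 * x j ^ 2 * x k ^ 2 * K j i k := by
    rw [Finset.sum_comm (s := Finset.univ) (t := Finset.univ)
      (f := fun i j => ∑ k, x i ^ 2 * x j ^ 2 * x k ^ 2 * K j i k)]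
    exact Finset.sum_congr rfl fun i _ => Finset.sum_congr rfl fun j _ =>
      Finset.sum_congr rfl fun k _ => by ring
  have hS3 : S = ∑ i, ∑ j, ∑ k, x i ^ 2 * x j ^ 2 * x k ^ 2 * K k i j := by
    have step1 : (∑ i, ∑ j, ∑ k, x i ^ 2 * x j ^ 2 * x k ^ 2 * K k i j)
        = ∑ i, ∑ k, ∑ j, x i ^ 2 * x j ^ 2 * x k ^ 2 * K k i j :=
      Finset.sum_congr rfl fun i _ => Finset.sum_comm
    rw [step1, Finset.sum_comm (s := Finset.univ) (t := Finset.univ)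
      (f := fun i k => ∑ j, x i ^ 2 * x j ^ 2 * x k ^ 2 * K k i j)]
    exact Finset.sum_congr rfl fun k _ => Finset.sum_congr rfl fun i _ =>
      Finset.sum_congr rfl fun j _ => by ring
  have hSnn : 0 ≤ S := by
    have h3S : S + S + S
        = ∑ i, ∑ j, ∑ k, x i ^ 2 * x j ^ 2 * x k ^ 2 * (K i j k + K j i k + K k i j) := by
      nth_rewrite 2 [hS2]
      nth_rewrite 2 [hS3]
      rw [hSdef, ← Finset.sum_add_distrib, ← Finset.sum_add_distrib]
      refine Finset.sum_congr rfl fun i _ => ?_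
      rw [← Finset.sum_add_distrib, ← Finset.sum_add_distrib]
      refine Finset.sum_congr rfl fun j _ => ?_
      rw [← Finset.sum_add_distrib, ← Finset.sum_add_distrib]
      exact Finset.sum_congr rfl fun k _ => by ring
    have hpos : 0 ≤ ∑ i, ∑ j, ∑ k,
        x i ^ 2 * x j ^ 2 * x k ^ 2 * (K i j k + K j i k + K k i j) := by
      refine Finset.sum_nonneg fun i _ => Finset.sum_nonneg fun j _ =>
        Finset.sum_nonneg fun k _ => ?_
      have h1' : (0:ℝ) ≤ x i ^ 2 * x j ^ 2 * x k ^ 2 := by positivity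
      exact mul_nonneg h1' (hc i j k)
    linarith
  rw [key]
  have := Finset.sum_nonneg (fun i (_ : i ∈ Finset.univ) =>
    mul_nonneg (sq_nonneg (x i)) (hpsd i))
  linarith
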